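/- Let X be a complex Banach space and let x : ℕ → X be a sequence with M := sup_{n≥0} ‖∑_{j=0}^{n} x_j‖ < ∞. For ε ∈ (0,π/2], let y^ε ∈ ℓ¹(ℤ) be given by y_0^ε = 1 − 3ε/(2π) and y_n^ε = (cos(2nε) − cos(nε))/(ε π n²) for n ≠ 0, and define x_n^ε = ∑_{j≥0} x_j y_{n−j}^ε for n ≥ 0. Then ‖x_n − x_n^ε‖ ≤ M ‖φ‖_{L¹(ℝ)} ε for all n ≥ 0 and all ε ∈ (0,π/2], where φ : ℝ → ℝ is defined by φ(0) = 0 and φ(t) = (2/π)((cos(2t) − cos(t))/t³ + (sin(2t) − (1/2)sin(t))/t²) for t ≠ 0. -/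

import Mathlib

open MeasureTheory Filter Set

/-- The function `φ` from the proof of Theorem 2.1(b):
`φ(0) = 0` and `φ(t) = (2/π)((cos 2t − cos t)/t³ + (sin 2t − ½ sin t)/t²)` for `t ≠ 0`. -/
noncomputable def phiFn (t : ℝ) : ℝ :=
  if t = 0 then 0
  else (2 / Real.pi) * ((Real.cos (2 * t) - Real.cos t) / t ^ 3 +
    (Real.sin (2 * t) - (1 / 2) * Real.sin t) / t ^ 2)

/-- The explicit sequence `y^ε`: `y_0^ε = 1 − 3ε/(2π)` and
`y_n^ε = (cos(2nε) − cos(nε))/(ε π n²)` for `n ≠ 0`. -/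
noncomputable def ySeq (ε : ℝ) (n : ℤ) : ℝ :=
  if n = 0 then 1 - 3 * ε / (2 * Real.pi)
  else (Real.cos (2 * n * ε) - Real.cos (n * ε)) / (ε * Real.pi * (n : ℝ) ^ 2)

noncomputable def gFn (t : ℝ) : ℝ :=
  if t = 0 then -3 / (2 * Real.pi)
  else (Real.cos (2 * t) - Real.cos t) / (Real.pi * t ^ 2)

lemma hasDerivAt_gFn {t : ℝ} (ht : t ≠ 0) : HasDerivAt gFn (-phiFn t) t := by
  have hπ : Real.pi ≠ 0 := Real.pi_ne_zero
  have h2 : HasDerivAt (fun s : ℝ => 2 * s) 2 t := by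
    simpa using (hasDerivAt_id t).const_mul (2:ℝ)
  have hc2 : HasDerivAt (fun s : ℝ => Real.cos (2*s)) (-Real.sin (2*t) * 2) t :=
    (Real.hasDerivAt_cos (2*t)).comp t h2
  have hu : HasDerivAt (fun s : ℝ => Real.cos (2*s) - Real.cos s)
      (-Real.sin (2*t) * 2 - -Real.sin t) t := hc2.sub (Real.hasDerivAt_cos t)
  have hv : HasDerivAt (fun s : ℝ => Real.pi * s ^ 2) (Real.pi * (2 * t)) t := by
    simpa using ((hasDerivAt_pow 2 t).const_mul Real.pi)
  have hvne : Real.pi * t ^ 2 ≠ 0 := by positivity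
  have hq := hu.div hv hvne
  have heq : gFn =ᶠ[nhds t] fun s => (Real.cos (2*s) - Real.cos s) / (Real.pi * s ^ 2) := by
    filter_upwards [isOpen_ne.mem_nhds ht] with s hs
    simp [gFn, hs]
  refine (hq.congr_of_eventuallyEq heq).congr_deriv ?_
  rw [phiFn, if_neg ht]
  field_simp
  ring

lemma key_quartic {t : ℝ} (ht : |t| ≤ 1/2) :
    |(Real.cos (2*t) - Real.cos t) + t * (Real.sin (2*t) - (1/2) * Real.sin t)| ≤ 4 * t^4 := by
  have h2t : |2*t| ≤ 1 := by rw [abs_mul]; simp only [abs_two]; linarith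
  have ht1 : |t| ≤ 1 := by linarith
  have h1 := Real.cos_bound h2t
  have h2 := Real.cos_bound ht1
  have h3 := Real.sin_bound h2t
  have h4 := Real.sin_bound ht1
  set c2 := Real.cos (2*t); set c1 := Real.cos t
  set s2 := Real.sin (2*t); set s1 := Real.sin t
  have habs2 : |2*t|^4 = 16 * t^4 := by
    rw [abs_mul, abs_two, mul_pow, ← abs_pow, abs_of_nonneg (by positivity : (0:ℝ) ≤ t^4)]
    norm_num
  have habs1 : |t|^4 = t^4 := by rw [← abs_pow, abs_of_nonneg (by positivity : (0:ℝ) ≤ t^4)]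
  rw [habs2] at h1; rw [habs1] at h2
  replace h3 : |s2 - (2*t - (2*t)^3/6)| ≤ 16 * t^4 * (5/96) := by
    rw [show |2*t|^5 = |2*t|^4 * |2*t| from pow_succ _ _, habs2] at h3
    have := mul_le_mul_of_nonneg_left h2t (by positivity : (0:ℝ) ≤ 16 * t^4)
    have : (0:ℝ) ≤ t^4 := by positivity
    linarith
  replace h4 : |s1 - (t - t^3/6)| ≤ t^4 * (5/96) := by
    rw [show |t|^5 = |t|^4 * |t| from pow_succ _ _, habs1] at h4
    have := mul_le_mul_of_nonneg_left ht1 (by positivity : (0:ℝ) ≤ t^4)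
    have : (0:ℝ) ≤ t^4 := by positivity
    linarith
  have key : (c2 - c1) + t * (s2 - (1/2) * s1)
      = (c2 - (1 - (2*t)^2/2)) - (c1 - (1 - t^2/2)) + t * (s2 - (2*t - (2*t)^3/6))
        - (t/2) * (s1 - (t - t^3/6)) - 5/4 * t^4 := by ring
  rw [key]
  have hb3 : |t * (s2 - (2*t - (2*t)^3/6))| ≤ (1/2) * (16 * t^4 * (5/96)) := by
    rw [abs_mul]
    exact mul_le_mul ht h3 (abs_nonneg _) (by norm_num)
  have hb4 : |(t/2) * (s1 - (t - t^3/6))| ≤ (1/4) * (t^4 * (5/96)) := by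
    rw [abs_mul, abs_div, abs_two]
    have : |t|/2 ≤ 1/4 := by linarith
    exact mul_le_mul this h4 (abs_nonneg _) (by norm_num)
  have ht4 : (0:ℝ) ≤ t^4 := by positivity
  have s1' : |(c2 - (1 - (2*t)^2/2)) - (c1 - (1 - t^2/2)) + t * (s2 - (2*t - (2*t)^3/6))
      - (t/2) * (s1 - (t - t^3/6)) - 5/4 * t^4|
      ≤ |(c2 - (1 - (2*t)^2/2)) - (c1 - (1 - t^2/2)) + t * (s2 - (2*t - (2*t)^3/6))
      - (t/2) * (s1 - (t - t^3/6))| + |5/4 * t^4| := abs_sub _ _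
  have s2' : |(c2 - (1 - (2*t)^2/2)) - (c1 - (1 - t^2/2)) + t * (s2 - (2*t - (2*t)^3/6))
      - (t/2) * (s1 - (t - t^3/6))|
      ≤ |(c2 - (1 - (2*t)^2/2)) - (c1 - (1 - t^2/2)) + t * (s2 - (2*t - (2*t)^3/6))|
      + |(t/2) * (s1 - (t - t^3/6))| := abs_sub _ _
  have s3' : |(c2 - (1 - (2*t)^2/2)) - (c1 - (1 - t^2/2)) + t * (s2 - (2*t - (2*t)^3/6))|
      ≤ |(c2 - (1 - (2*t)^2/2)) - (c1 - (1 - t^2/2))| + |t * (s2 - (2*t - (2*t)^3/6))| :=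
    abs_add_le _ _
  have s4' : |(c2 - (1 - (2*t)^2/2)) - (c1 - (1 - t^2/2))|
      ≤ |(c2 - (1 - (2*t)^2/2))| + |(c1 - (1 - t^2/2))| := abs_sub _ _
  have h5 : |5/4 * t^4| = 5/4 * t^4 := by
    rw [abs_mul, abs_of_nonneg (by norm_num : (0:ℝ) ≤ 5/4),
      abs_of_nonneg (by positivity : (0:ℝ) ≤ t^4)]
  rw [h5] at s1'
  nlinarith [h1, h2, hb3, hb4]

lemma phiFn_abs_le {t : ℝ} (ht : |t| ≤ 1/2) : |phiFn t| ≤ 3 * |t| := by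
  rcases eq_or_ne t 0 with rfl | ht0
  · simp [phiFn]
  have hπ : (0:ℝ) < Real.pi := Real.pi_pos
  have hform : phiFn t = (2 / Real.pi) * (((Real.cos (2*t) - Real.cos t)
      + t * (Real.sin (2*t) - (1/2) * Real.sin t)) / t^3) := by
    rw [phiFn, if_neg ht0]; field_simp
  rw [hform, abs_mul, abs_of_pos (by positivity : (0:ℝ) < 2 / Real.pi)]
  have hk := key_quartic ht
  have ht3 : |t^3| = |t|^3 := abs_pow t 3
  have ht3pos : (0:ℝ) < |t|^3 := by positivity
  have ht4 : t^4 = |t| * |t|^3 := by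
    rw [← pow_succ', ← abs_pow, abs_of_nonneg (by positivity : (0:ℝ) ≤ t^4)]
  calc 2 / Real.pi * |(Real.cos (2*t) - Real.cos t
        + t * (Real.sin (2*t) - (1/2) * Real.sin t)) / t^3|
      = 2 / Real.pi * (|Real.cos (2*t) - Real.cos t
        + t * (Real.sin (2*t) - (1/2) * Real.sin t)| / |t|^3) := by rw [abs_div, ht3]
    _ ≤ 2 / Real.pi * ((4 * (|t| * |t|^3)) / |t|^3) := by
        rw [← ht4]; gcongr
    _ = (8 / Real.pi) * |t| := by field_simp; ring
    _ ≤ 3 * |t| := by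
        have h8 : 8 / Real.pi ≤ 3 := by
          rw [div_le_iff₀ hπ]; nlinarith [Real.pi_gt_three]
        exact mul_le_mul_of_nonneg_right h8 (abs_nonneg t)

lemma continuous_phiFn : Continuous phiFn := by
  rw [continuous_iff_continuousAt]
  intro t
  rcases eq_or_ne t 0 with rfl | ht0
  · have h0 : phiFn 0 = 0 := by simp [phiFn]
    rw [ContinuousAt, h0]
    have hb : ∀ᶠ s in nhds (0:ℝ), ‖phiFn s‖ ≤ 3 * |s| := by
      filter_upwards [Metric.ball_mem_nhds (0:ℝ) (by norm_num : (0:ℝ) < 1/2)] with s hs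
      simp only [Metric.mem_ball, Real.dist_eq, sub_zero] at hs
      exact phiFn_abs_le hs.le
    have htd : Tendsto (fun s : ℝ => 3 * |s|) (nhds 0) (nhds 0) := by
      have : Tendsto (fun s : ℝ => 3 * |s|) (nhds 0) (nhds (3 * |(0:ℝ)|)) :=
        (continuous_const.mul continuous_abs).tendsto 0
      simpa using this
    exact squeeze_zero_norm' hb htd
  · have heq : phiFn =ᶠ[nhds t] fun s => (2 / Real.pi) * ((Real.cos (2 * s) - Real.cos s) / s ^ 3 +
        (Real.sin (2 * s) - (1 / 2) * Real.sin s) / s ^ 2) := by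
      filter_upwards [isOpen_ne.mem_nhds ht0] with s hs
      simp [phiFn, hs]
    apply ContinuousAt.congr _ heq.symm
    apply ContinuousAt.mul continuousAt_const
    apply ContinuousAt.add
    · exact ((Real.continuous_cos.comp (continuous_const.mul continuous_id)).sub
        Real.continuous_cos).continuousAt.div ((continuous_pow 3).continuousAt) (pow_ne_zero 3 ht0)
    · exact ((Real.continuous_sin.comp (continuous_const.mul continuous_id)).sub
        (continuous_const.mul Real.continuous_sin)).continuousAt.div
        ((continuous_pow 2).continuousAt) (pow_ne_zero 2 ht0)

lemma continuous_gFn : Continuous gFn := by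
  rw [continuous_iff_continuousAt]
  intro t
  rcases eq_or_ne t 0 with rfl | ht0
  · rw [ContinuousAt, show nhds (gFn 0) = nhds (gFn 0 + 0) by rw [add_zero]]
    have : Tendsto (fun s : ℝ => gFn 0 + (gFn s - gFn 0)) (nhds 0) (nhds (gFn 0 + 0)) := by
      apply Tendsto.const_add
      have hb : ∀ᶠ s in nhds (0:ℝ), ‖gFn s - gFn 0‖ ≤ s ^ 2 := by
        filter_upwards [Metric.ball_mem_nhds (0:ℝ) (by norm_num : (0:ℝ) < 1/2)] with s hs
        simp only [Metric.mem_ball, Real.dist_eq, sub_zero] at hs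
        rcases eq_or_ne s 0 with rfl | hs0
        · simp
        have hπ : (0:ℝ) < Real.pi := Real.pi_pos
        have h2s : |2*s| ≤ 1 := by rw [abs_mul, abs_two]; linarith
        have hs1 : |s| ≤ 1 := by linarith
        have h1 := Real.cos_bound h2s
        have h2 := Real.cos_bound hs1
        have habs2 : |2*s|^4 = 16 * s^4 := by
          rw [abs_mul, abs_two, mul_pow, ← abs_pow, abs_of_nonneg (by positivity : (0:ℝ) ≤ s^4)]
          norm_num
        have habs1 : |s|^4 = s^4 := by
          rw [← abs_pow, abs_of_nonneg (by positivity : (0:ℝ) ≤ s^4)]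
        rw [habs2] at h1; rw [habs1] at h2
        have hgf : gFn s - gFn 0 = ((Real.cos (2*s) - (1 - (2*s)^2/2))
            - (Real.cos s - (1 - s^2/2))) / (Real.pi * s^2) := by
          rw [gFn, gFn, if_neg hs0, if_pos rfl]
          field_simp
          ring
        rw [Real.norm_eq_abs, hgf, abs_div,
          abs_of_pos (by positivity : (0:ℝ) < Real.pi * s^2)]
        rw [div_le_iff₀ (by positivity : (0:ℝ) < Real.pi * s^2)]
        have htri : |(Real.cos (2*s) - (1 - (2*s)^2/2)) - (Real.cos s - (1 - s^2/2))|
            ≤ 16 * s^4 * (5/96) + s^4 * (5/96) := (abs_sub _ _).trans (by gcongr)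
        have hss : s^2 ≤ 1/4 := by nlinarith [sq_abs s, abs_nonneg s]
        have hs2 : s^4 ≤ s^2 * (1/4) := by nlinarith [sq_nonneg s]
        have h3pi : 3 * s^4 ≤ Real.pi * s^4 := by
          nlinarith [Real.pi_gt_three, pow_nonneg (sq_nonneg s) 2, sq_nonneg (s^2)]
        have hring : s^2 * (Real.pi * s^2) = Real.pi * s^4 := by ring
        rw [hring]
        linarith [htri, h3pi, hs2, sq_nonneg (s^2)]
      have htd : Tendsto (fun s : ℝ => s ^ 2) (nhds (0:ℝ)) (nhds 0) := by
        have : Tendsto (fun s : ℝ => s ^ 2) (nhds 0) (nhds ((0:ℝ) ^ 2)) :=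
          (continuous_pow 2).tendsto 0
        simpa using this
      exact squeeze_zero_norm' hb htd
    exact this.congr (by intro s; ring)
  · have heq : gFn =ᶠ[nhds t]
        fun s => (Real.cos (2 * s) - Real.cos s) / (Real.pi * s ^ 2) := by
      filter_upwards [isOpen_ne.mem_nhds ht0] with s hs
      simp [gFn, hs]
    apply ContinuousAt.congr _ heq.symm
    exact ((Real.continuous_cos.comp (continuous_const.mul continuous_id)).sub
      Real.continuous_cos).continuousAt.div
      ((continuous_const.mul (continuous_pow 2)).continuousAt)
      (by positivity)

lemma abs_gFn_le {t : ℝ} (ht : t ≠ 0) : |gFn t| ≤ 2 / (Real.pi * t ^ 2) := by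
  rw [gFn, if_neg ht, abs_div, abs_of_pos (by positivity : (0:ℝ) < Real.pi * t^2)]
  apply div_le_div_of_nonneg_right ?_ (by positivity)
  calc |Real.cos (2*t) - Real.cos t| ≤ |Real.cos (2*t)| + |Real.cos t| := abs_sub _ _
    _ ≤ 2 := by
      have := Real.abs_cos_le_one (2*t); have := Real.abs_cos_le_one t; linarith

lemma integrable_phiFn : Integrable phiFn := by
  have hmaj : ∀ t : ℝ, ‖phiFn t‖ ≤ 20 * (1 + t^2)⁻¹ := by
    intro t
    rw [Real.norm_eq_abs]
    have h1t : (0:ℝ) < 1 + t^2 := by positivity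
    rcases le_or_gt |t| (1/2) with h | h
    · have := phiFn_abs_le h
      have h2 : 1 + t^2 ≤ 5/4 := by nlinarith [sq_abs t, abs_nonneg t]
      have h3 : 3 * |t| ≤ 3/2 := by linarith
      have : 20 * (1 + t^2)⁻¹ ≥ 16 := by
        rw [ge_iff_le, ← div_eq_mul_inv, le_div_iff₀ h1t]; nlinarith
      linarith
    · have ht0 : t ≠ 0 := by intro h0; rw [h0] at h; simp at h; linarith
      have hπ : (0:ℝ) < Real.pi := Real.pi_pos
      have ha : (1:ℝ)/2 < |t| := h
      have ht2 : (1:ℝ)/4 ≤ t^2 := by nlinarith [sq_abs t]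
      have habs : |phiFn t| ≤ (2/Real.pi) * (2 / |t|^3 + (3/2) / t^2) := by
        rw [phiFn, if_neg ht0, abs_mul, abs_of_pos (by positivity : (0:ℝ) < 2/Real.pi)]
        apply mul_le_mul_of_nonneg_left _ (by positivity)
        refine (abs_add_le _ _).trans ?_
        apply add_le_add
        · rw [abs_div, abs_pow]
          apply div_le_div_of_nonneg_right ?_ (by positivity)
          · calc |Real.cos (2*t) - Real.cos t| ≤ |Real.cos (2*t)| + |Real.cos t| := abs_sub _ _
              _ ≤ 2 := by
                have := Real.abs_cos_le_one (2*t); have := Real.abs_cos_le_one t; linarith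
        · rw [abs_div, abs_pow, sq_abs]
          apply div_le_div_of_nonneg_right ?_ (by positivity)
          · calc |Real.sin (2*t) - 1/2 * Real.sin t| ≤ |Real.sin (2*t)| + |1/2 * Real.sin t| :=
                abs_sub _ _
              _ ≤ 3/2 := by
                have := Real.abs_sin_le_one (2*t); have h2 := Real.abs_sin_le_one t
                rw [abs_mul]
                have : |(1:ℝ)/2| = 1/2 := by norm_num
                nlinarith [Real.abs_sin_le_one (2*t), Real.abs_sin_le_one t, abs_nonneg (Real.sin t)]
      have hcube : 2 / |t|^3 ≤ 4 / t^2 := by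
        rw [div_le_div_iff₀ (by positivity) (by positivity)]
        have h3 : |t|^3 = |t| * t^2 := by
          rw [pow_succ', sq_abs]
        rw [h3]
        nlinarith [abs_nonneg t, sq_nonneg t]
      have hfin : (2/Real.pi) * (4 / t^2 + (3/2) / t^2) ≤ 20 * (1 + t^2)⁻¹ := by
        rw [← div_eq_mul_inv, ← add_div]
        have heq : 2/Real.pi * ((4+3/2)/t^2) = 11/(Real.pi * t^2) := by
          field_simp; ring
        rw [heq, div_le_div_iff₀ (by positivity) h1t]
        have hπ3 : (3:ℝ) < Real.pi := Real.pi_gt_three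
        nlinarith [sq_nonneg t, ht2, mul_le_mul_of_nonneg_left hπ3.le (le_trans (by norm_num) ht2)]
      calc |phiFn t| ≤ (2/Real.pi) * (2 / |t|^3 + (3/2) / t^2) := habs
        _ ≤ (2/Real.pi) * (4 / t^2 + (3/2) / t^2) := by gcongr
        _ ≤ 20 * (1 + t^2)⁻¹ := hfin
  have hint : Integrable (fun t : ℝ => 20 * (1 + t^2)⁻¹) := integrable_inv_one_add_sq.const_mul 20
  exact hint.mono' continuous_phiFn.aestronglyMeasurable (Eventually.of_forall hmaj)

lemma ySeq_eq {ε : ℝ} (hε : ε ≠ 0) (k : ℤ) :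
    ySeq ε k = (if k = 0 then (1:ℝ) else 0) + ε * gFn ((k:ℝ) * ε) := by
  rcases eq_or_ne k 0 with rfl | hk
  · simp only [ySeq, if_pos rfl, Int.cast_zero, zero_mul, gFn, ↓reduceIte]
    have hπ : Real.pi ≠ 0 := Real.pi_ne_zero
    field_simp
    ring
  · have hkR : ((k:ℝ)) ≠ 0 := Int.cast_ne_zero.mpr hk
    have hkε : (k:ℝ) * ε ≠ 0 := mul_ne_zero hkR hε
    rw [ySeq, if_neg hk, if_neg hk, gFn, if_neg hkε]
    have hπ : Real.pi ≠ 0 := Real.pi_ne_zero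
    have h2 : 2 * (k:ℝ) * ε = 2 * ((k:ℝ) * ε) := by ring
    rw [h2]
    field_simp
    ring

lemma gFn_increment {ε : ℝ} (hε : 0 < ε) (k : ℤ) :
    |ε * gFn (((k:ℝ) + 1) * ε) - ε * gFn ((k:ℝ) * ε)|
      ≤ ε * ∫ t in Set.Ioc ((k:ℝ) * ε) (((k:ℝ) + 1) * ε), |phiFn t| := by
  have hab : (k:ℝ) * ε ≤ ((k:ℝ) + 1) * ε := by nlinarith
  have hne : ∀ t ∈ Ioo ((k:ℝ) * ε) (((k:ℝ) + 1) * ε), t ≠ 0 := by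
    intro t htm
    rcases le_or_gt 0 (k:ℝ) with hk | hk
    · have : 0 < t := lt_of_le_of_lt (mul_nonneg hk hε.le) htm.1
      exact this.ne'
    · have hk1 : (k:ℝ) + 1 ≤ 0 := by
        have : (k:ℤ) < 0 := by exact_mod_cast hk
        have : (k:ℤ) + 1 ≤ 0 := this
        exact_mod_cast this
      have : t < 0 := lt_of_lt_of_le htm.2 (by nlinarith)
      exact this.ne
  have hftc : ∫ t in ((k:ℝ) * ε)..(((k:ℝ) + 1) * ε), -phiFn t
      = gFn (((k:ℝ) + 1) * ε) - gFn ((k:ℝ) * ε) := by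
    apply intervalIntegral.integral_eq_sub_of_hasDerivAt_of_le hab
      (continuous_gFn.continuousOn)
    · exact fun t ht => hasDerivAt_gFn (hne t ht)
    · exact (continuous_phiFn.neg).intervalIntegrable _ _
  have h1 : |gFn (((k:ℝ) + 1) * ε) - gFn ((k:ℝ) * ε)|
      ≤ ∫ t in Set.Ioc ((k:ℝ) * ε) (((k:ℝ) + 1) * ε), |phiFn t| := by
    rw [← hftc]
    refine (intervalIntegral.abs_integral_le_integral_abs hab).trans ?_
    rw [intervalIntegral.integral_of_le hab]
    simp only [abs_neg]
    exact le_refl _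
  calc |ε * gFn (((k:ℝ) + 1) * ε) - ε * gFn ((k:ℝ) * ε)|
      = ε * |gFn (((k:ℝ) + 1) * ε) - gFn ((k:ℝ) * ε)| := by
        rw [← mul_sub, abs_mul, abs_of_pos hε]
    _ ≤ ε * ∫ t in Set.Ioc ((k:ℝ) * ε) (((k:ℝ) + 1) * ε), |phiFn t| := by
        exact mul_le_mul_of_nonneg_left h1 hε.le

lemma hasSum_partition {ε : ℝ} (hε : 0 < ε) :
    HasSum (fun k : ℤ => ∫ t in Set.Ioc ((k:ℝ) * ε) (((k:ℝ) + 1) * ε), |phiFn t|)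
      (∫ t : ℝ, |phiFn t|) := by
  have hU : (⋃ k : ℤ, Set.Ioc ((k:ℝ) * ε) (((k:ℝ) + 1) * ε)) = univ := by
    ext t
    simp only [mem_iUnion, mem_univ, iff_true, mem_Ioc]
    refine ⟨⌈t/ε⌉ - 1, ?_, ?_⟩
    · have h2 : (↑(⌈t/ε⌉) : ℝ) - 1 < t/ε := by
        have := Int.ceil_lt_add_one (t/ε)
        linarith
      push_cast
      have h3 : ((⌈t/ε⌉:ℝ) - 1) * ε < (t/ε) * ε := mul_lt_mul_of_pos_right h2 hε
      have h4 : (t/ε) * ε = t := by field_simp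
      linarith
    · have h2 : t/ε ≤ (↑⌈t/ε⌉ : ℝ) := Int.le_ceil _
      push_cast
      have h3 : (t/ε) * ε ≤ (↑⌈t/ε⌉ : ℝ) * ε := mul_le_mul_of_nonneg_right h2 hε.le
      have h4 : (t/ε) * ε = t := by field_simp
      have h5 : (↑⌈t/ε⌉ : ℝ) * ε = (↑⌈t/ε⌉ - 1 + 1) * ε := by ring
      linarith
  have hd : Pairwise (Function.onFun Disjoint
      fun k : ℤ => Set.Ioc ((k:ℝ) * ε) (((k:ℝ) + 1) * ε)) := by
    intro k l hkl
    simp only [Function.onFun]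
    rw [Set.Ioc_disjoint_Ioc]
    rcases lt_or_gt_of_ne hkl with h | h
    · have : (k:ℝ) + 1 ≤ (l:ℝ) := by exact_mod_cast h
      refine le_trans (min_le_left _ _) (le_trans ?_ (le_max_right _ _))
      exact mul_le_mul_of_nonneg_right this hε.le
    · have : (l:ℝ) + 1 ≤ (k:ℝ) := by exact_mod_cast h
      refine le_trans (min_le_right _ _) (le_trans ?_ (le_max_left _ _))
      exact mul_le_mul_of_nonneg_right this hε.le
  have := MeasureTheory.hasSum_integral_iUnion (μ := volume)
    (f := fun t => |phiFn t|) (fun k : ℤ => measurableSet_Ioc) hd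
    (by rw [hU]; exact integrable_phiFn.abs.integrableOn)
  rw [hU] at this
  simpa using this

open Topology

/-- **The convolution estimate (proof of Theorem 2.1(b) of Seifert).**  If the
partial sums of `x` are bounded by `M`, then the convolution
`x_n^ε = ∑_{j ≥ 0} x_j y_{n−j}^ε` satisfies
`‖x_n − x_n^ε‖ ≤ M ‖φ‖_{L¹(ℝ)} ε` for all `n ≥ 0` and `ε ∈ (0, π/2]`. -/
theorem stmt_12 {X : Type*} [NormedAddCommGroup X] [NormedSpace ℂ X] [CompleteSpace X]
    (x : ℕ → X) (M : ℝ) (hM : ∀ n : ℕ, ‖∑ j ∈ Finset.range (n + 1), x j‖ ≤ M) :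
    ∀ n : ℕ, ∀ ε ∈ Set.Ioc (0 : ℝ) (Real.pi / 2),
      ‖x n - ∑' j : ℕ, ySeq ε ((n : ℤ) - (j : ℤ)) • x j‖ ≤
        M * (∫ t : ℝ, |phiFn t|) * ε := by
  intro n ε hεmem
  obtain ⟨hε0, -⟩ := hεmem
  have hεne : ε ≠ 0 := hε0.ne'
  have hπ : (0:ℝ) < Real.pi := Real.pi_pos
  set s : ℕ → X := fun m => ∑ j ∈ Finset.range (m+1), x j with hs_def
  have hs : ∀ m, ‖s m‖ ≤ M := hM
  have hM0 : (0:ℝ) ≤ M := le_trans (norm_nonneg _) (hM 0)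
  have hx0 : x 0 = s 0 := by simp [hs_def]
  have hxsucc : ∀ j, x (j+1) = s (j+1) - s j := by
    intro j
    simp [hs_def, Finset.sum_range_succ]
  have hxb : ∀ j, ‖x j‖ ≤ 2 * M := by
    intro j
    cases j with
    | zero => rw [hx0]; linarith [hs 0]
    | succ m =>
      rw [hxsucc m]
      calc ‖s (m+1) - s m‖ ≤ ‖s (m+1)‖ + ‖s m‖ := norm_sub_le _ _
        _ ≤ 2 * M := by linarith [hs (m+1), hs m]
  set z : ℤ → ℝ := fun k => ε * gFn ((k:ℝ) * ε) with hz_def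
  have hyz : ∀ k, ySeq ε k = (if k = 0 then (1:ℝ) else 0) + z k := fun k => ySeq_eq hεne k
  set A : ℤ → ℝ := fun k => z (k+1) - z k with hA_def
  set I : ℤ → ℝ := fun k => ∫ t in Set.Ioc ((k:ℝ) * ε) (((k:ℝ) + 1) * ε), |phiFn t| with hI_def
  have hA : ∀ k, |A k| ≤ ε * I k := by
    intro k
    have hcast : ((k+1:ℤ):ℝ) = (k:ℝ) + 1 := by push_cast; ring
    have := gFn_increment hε0 k
    simpa [hz_def, hA_def, hI_def, hcast] using this
  have hI_hasSum : HasSum I (∫ t : ℝ, |phiFn t|) := hasSum_partition hε0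
  have hεI_sum : Summable (fun k : ℤ => ε * I k) := hI_hasSum.summable.mul_left ε
  have hAsum : Summable (fun k : ℤ => |A k|) := by
    apply Summable.of_norm_bounded hεI_sum
    intro k
    rw [Real.norm_eq_abs, abs_abs]
    exact hA k
  have htsumA : ∑' k : ℤ, |A k| ≤ ε * ∫ t : ℝ, |phiFn t| := by
    calc ∑' k : ℤ, |A k| ≤ ∑' k : ℤ, ε * I k := Summable.tsum_le_tsum hA hAsum hεI_sum
      _ = ε * ∫ t : ℝ, |phiFn t| := by rw [tsum_mul_left, hI_hasSum.tsum_eq]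
  -- bound on |z k| for k ≠ 0
  have hzb : ∀ k : ℤ, k ≠ 0 → |z k| ≤ (2/(Real.pi * ε)) * (1/((k:ℝ))^2) := by
    intro k hk
    have hkR : ((k:ℝ)) ≠ 0 := Int.cast_ne_zero.mpr hk
    have hkε : (k:ℝ) * ε ≠ 0 := mul_ne_zero hkR hεne
    have h := abs_gFn_le hkε
    calc |z k| = ε * |gFn ((k:ℝ) * ε)| := by
          rw [hz_def, abs_mul, abs_of_pos hε0]
      _ ≤ ε * (2 / (Real.pi * ((k:ℝ)*ε)^2)) := mul_le_mul_of_nonneg_left h hε0.le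
      _ = (2/(Real.pi * ε)) * (1/((k:ℝ))^2) := by field_simp
  -- summability of the z-part
  set fz : ℕ → X := fun j => z ((n:ℤ) - j) • x j with hfz_def
  have hBsum : Summable (fun j : ℕ => (4*M/(Real.pi * ε)) * (1/(((n:ℤ) - (j:ℤ) : ℤ):ℝ)^2)) := by
    apply Summable.mul_left
    have hbase : Summable (fun m : ℤ => 1/((m:ℝ))^2) :=
      Real.summable_one_div_int_pow.mpr (by norm_num)
    have hinj : Function.Injective (fun j : ℕ => (n:ℤ) - j) := by
      intro a b h
      simp only [sub_right_inj, Int.natCast_inj] at h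
      exact h
    exact hbase.comp_injective hinj
  have hfzsum : Summable fz := by
    apply Summable.of_norm_bounded_eventually hBsum
    rw [Filter.eventually_cofinite]
    apply Set.Finite.subset (Set.finite_singleton n)
    intro j hj
    simp only [Set.mem_setOf_eq, not_le] at hj
    by_contra hjn
    simp only [Set.mem_singleton_iff] at hjn
    have hk : (n:ℤ) - j ≠ 0 := by
      intro h0
      exact hjn (by exact_mod_cast (sub_eq_zero.mp h0).symm)
    have h1 : ‖fz j‖ ≤ (2/(Real.pi * ε)) * (1/((((n:ℤ) - j):ℤ):ℝ)^2) * (2*M) := by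
      rw [hfz_def]
      simp only
      rw [norm_smul, Real.norm_eq_abs]
      exact mul_le_mul (hzb _ hk) (hxb j) (norm_nonneg _)
        (by positivity)
    have h2 : (2/(Real.pi * ε)) * (1/((((n:ℤ) - j):ℤ):ℝ)^2) * (2*M)
        = (4*M/(Real.pi * ε)) * (1/((((n:ℤ) - j):ℤ):ℝ)^2) := by ring
    rw [h2] at h1
    exact absurd h1 (not_le.mpr hj)
  -- summability of Abel-transformed series
  have hinj2 : Function.Injective (fun j : ℕ => (n:ℤ) - j - 1) := by
    intro a b h
    simp only [sub_left_inj, sub_right_inj, Int.natCast_inj] at h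
    exact h
  have hAcomp : Summable (fun j : ℕ => |A ((n:ℤ) - j - 1)|) := hAsum.comp_injective hinj2
  set g2 : ℕ → X := fun j => A ((n:ℤ) - j - 1) • s j with hg2_def
  have hg2norm : ∀ j, ‖g2 j‖ ≤ |A ((n:ℤ) - j - 1)| * M := by
    intro j
    rw [hg2_def]
    simp only
    rw [norm_smul, Real.norm_eq_abs]
    exact mul_le_mul_of_nonneg_left (hs j) (abs_nonneg _)
  have hg2sum : Summable g2 := by
    apply Summable.of_norm_bounded (hAcomp.mul_right M)
    exact hg2norm
  -- finite Abel summation identity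
  have hfin : ∀ N : ℕ, ∑ j ∈ Finset.range (N+1), z ((n:ℤ) - j) • x j
      = (∑ j ∈ Finset.range (N+1), A ((n:ℤ) - j - 1) • s j) + z ((n:ℤ) - N - 1) • s N := by
    intro N
    induction N with
    | zero =>
      simp only [zero_add, Finset.sum_range_one, Nat.cast_zero, sub_zero, hx0]
      have hAe : A ((n:ℤ) - 1) = z n - z ((n:ℤ) - 1) := by
        simp only [hA_def]
        congr 2
        ring
      rw [hAe, sub_smul]
      abel
    | succ N ih =>
      have hxN : x (N+1) = s (N+1) - s N := hxsucc N
      have e1 : ((N+1:ℕ):ℤ) = (N:ℤ) + 1 := by push_cast; ring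
      have e2 : (n:ℤ) - ((N+1:ℕ):ℤ) = (n:ℤ) - N - 1 := by rw [e1]; ring
      rw [Finset.sum_range_succ, ih,
        Finset.sum_range_succ (fun j => A ((n:ℤ) - (j:ℤ) - 1) • s j) (N+1), hxN, e2]
      have hAexp : A ((n:ℤ) - N - 1 - 1) = z ((n:ℤ) - N - 1) - z ((n:ℤ) - N - 1 - 1) := by
        rw [hA_def]
        simp only
        congr 2
        ring
      rw [hAexp, sub_smul, smul_sub]
      abel
  -- tail tends to zero
  have htail : Tendsto (fun N : ℕ => z ((n:ℤ) - N - 1) • s N) atTop (𝓝 (0 : X)) := by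
    have hb : ∀ᶠ N : ℕ in atTop, ‖z ((n:ℤ) - N - 1) • s N‖
        ≤ (2*M/(Real.pi * ε)) * (((N:ℝ) + (1 - (n:ℝ)))^2)⁻¹ := by
      filter_upwards [eventually_ge_atTop n] with N hN
      have hk : (n:ℤ) - N - 1 ≠ 0 := by omega
      have hcast : ((((n:ℤ) - N - 1):ℤ):ℝ)^2 = ((N:ℝ) + (1 - (n:ℝ)))^2 := by
        push_cast
        ring
      rw [norm_smul, Real.norm_eq_abs]
      calc |z ((n:ℤ) - N - 1)| * ‖s N‖
          ≤ ((2/(Real.pi * ε)) * (1/((((n:ℤ) - N - 1):ℤ):ℝ)^2)) * M :=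
            mul_le_mul (hzb _ hk) (hs N) (norm_nonneg _) (by positivity)
        _ = (2*M/(Real.pi * ε)) * (((N:ℝ) + (1 - (n:ℝ)))^2)⁻¹ := by
            rw [hcast]; ring
    have ht1 : Tendsto (fun N : ℕ => (N:ℝ) + (1 - (n:ℝ))) atTop atTop :=
      tendsto_atTop_add_const_right atTop _ tendsto_natCast_atTop_atTop
    have ht2 : Tendsto (fun N : ℕ => ((N:ℝ) + (1 - (n:ℝ)))^2) atTop atTop := by
      have := ht1.atTop_mul_atTop₀ ht1
      apply this.congr
      intro N
      ring
    have ht3 : Tendsto (fun N : ℕ => (((N:ℝ) + (1 - (n:ℝ)))^2)⁻¹) atTop (𝓝 0) :=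
      ht2.inv_tendsto_atTop
    have ht4 : Tendsto (fun N : ℕ => (2*M/(Real.pi * ε)) * (((N:ℝ) + (1 - (n:ℝ)))^2)⁻¹)
        atTop (𝓝 0) := by
      have := ht3.const_mul (2*M/(Real.pi * ε))
      simpa using this
    exact squeeze_zero_norm' hb ht4
  -- identify the two tsums
  have key : ∑' j, fz j = ∑' j, g2 j := by
    have h1 : Tendsto (fun N : ℕ => ∑ j ∈ Finset.range (N+1), fz j) atTop (𝓝 (∑' j, fz j)) :=
      hfzsum.hasSum.tendsto_sum_nat.comp (tendsto_add_atTop_nat 1)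
    have h2 : Tendsto (fun N : ℕ => (∑ j ∈ Finset.range (N+1), g2 j) + z ((n:ℤ) - N - 1) • s N)
        atTop (𝓝 (∑' j, g2 j + 0)) :=
      (hg2sum.hasSum.tendsto_sum_nat.comp (tendsto_add_atTop_nat 1)).add htail
    rw [add_zero] at h2
    have h1' : Tendsto (fun N : ℕ => (∑ j ∈ Finset.range (N+1), g2 j) + z ((n:ℤ) - N - 1) • s N)
        atTop (𝓝 (∑' j, fz j)) := by
      apply h1.congr
      intro N
      exact hfin N
    exact tendsto_nhds_unique h1' h2
  -- decompose the statement tsum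
  have hdecomp : (∑' j : ℕ, ySeq ε ((n:ℤ) - j) • x j) = x n + ∑' j, fz j := by
    have h0 : ∀ j : ℕ, ySeq ε ((n:ℤ) - j) • x j = (if j = n then x n else 0) + fz j := by
      intro j
      rw [hyz ((n:ℤ) - j), add_smul]
      congr 1
      by_cases hj : j = n
      · subst hj
        rw [if_pos (by ring), if_pos rfl, one_smul]
      · rw [if_neg, if_neg hj, zero_smul]
        intro h0
        exact hj (by exact_mod_cast (sub_eq_zero.mp h0).symm)
    have hsing : Summable (fun j : ℕ => if j = n then x n else 0) :=
      ⟨x n, hasSum_ite_eq n (x n)⟩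
    rw [tsum_congr h0, Summable.tsum_add hsing hfzsum, tsum_ite_eq n (fun _ => x n)]
  -- final estimate
  rw [hdecomp]
  have hsimp : x n - (x n + ∑' j, fz j) = -(∑' j, g2 j) := by
    rw [key]; abel
  rw [hsimp, norm_neg]
  have hnorm_sum : Summable (fun j : ℕ => ‖g2 j‖) := by
    apply Summable.of_nonneg_of_le (fun j => norm_nonneg _) hg2norm (hAcomp.mul_right M)
  calc ‖∑' j, g2 j‖ ≤ ∑' j, ‖g2 j‖ := norm_tsum_le_tsum_norm hnorm_sum
    _ ≤ ∑' j : ℕ, |A ((n:ℤ) - j - 1)| * M :=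
        Summable.tsum_le_tsum hg2norm hnorm_sum (hAcomp.mul_right M)
    _ = (∑' j : ℕ, |A ((n:ℤ) - j - 1)|) * M := tsum_mul_right
    _ ≤ (∑' k : ℤ, |A k|) * M := by
        apply mul_le_mul_of_nonneg_right _ hM0
        exact Summable.tsum_le_tsum_of_inj _ hinj2 (fun c _ => abs_nonneg _) (fun j => le_refl _)
          hAcomp hAsum
    _ ≤ (ε * ∫ t : ℝ, |phiFn t|) * M := mul_le_mul_of_nonneg_right htsumA hM0
    _ = M * (∫ t : ℝ, |phiFn t|) * ε := by ring
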